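/- Let a, b ∈ ℂ be nonzero, k = ±1, let p : ℂ → ℂ be a nonzero constant function with value P, and let g : ℂ → ℂ be entire with deriv g z = k·b/a for all z. Then f(z) := (k/(2ib))·(exp(ig(z)) - P·exp(-ig(z))) satisfies (a·f'(z))² + (b·f(z))² = P for all z ∈ ℂ. -/

import Mathlib

open Complex

theorem stmt_8 (g : ℂ → ℂ) (hg : Differentiable ℂ g) (a b P k : ℂ)
    (ha : a ≠ 0) (hb : b ≠ 0) (hP : P ≠ 0) (hk : k ^ 2 = 1)
    (hg' : ∀ z : ℂ, deriv g z = k * b / a)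
    (f : ℂ → ℂ)
    (hf : ∀ z : ℂ, f z = (k / (2 * I * b)) * (exp (I * g z) - P * exp (-(I * g z)))) :
    ∀ z : ℂ, (a * deriv f z) ^ 2 + (b * f z) ^ 2 = P := by
  have hfe : f = fun z => (k / (2 * I * b)) * (exp (I * g z) - P * exp (-(I * g z))) :=
    funext hf
  intro z
  have hgd : HasDerivAt g (k * b / a) z := by
    simpa [hg' z] using (hg z).hasDerivAt
  have h1 : HasDerivAt (fun z => I * g z) (I * (k * b / a)) z := hgd.const_mul I
  have h2 : HasDerivAt (fun z => exp (I * g z)) (exp (I * g z) * (I * (k * b / a))) z := h1.cexp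
  have h3 : HasDerivAt (fun z => exp (-(I * g z))) (exp (-(I * g z)) * -(I * (k * b / a))) z :=
    h1.neg.cexp
  have h4 : HasDerivAt f
      ((k / (2 * I * b)) *
        (exp (I * g z) * (I * (k * b / a)) - P * (exp (-(I * g z)) * -(I * (k * b / a))))) z := by
    rw [hfe]
    exact (h2.sub (h3.const_mul P)).const_mul (k / (2 * I * b))
  set E := exp (I * g z) with hE
  set F := exp (-(I * g z)) with hF
  have hexp : E * F = 1 := by
    rw [hE, hF, ← exp_add]; simp
  have hI : I ^ 2 = -1 := I_sq
  have hIne : (I : ℂ) ≠ 0 := I_ne_zero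
  have hD : a * deriv f z = k ^ 2 / 2 * (E + P * F) := by
    rw [h4.deriv]
    field_simp
    ring
  have hB : b * f z = -(I * k / 2) * (E - P * F) := by
    rw [hf z]
    field_simp
    linear_combination (k * (exp (I * g z) - P * exp (-(I * g z)))) * hI
  rw [hD, hB]
  linear_combination ((k ^ 2 + 1) / 4 * (E + P * F) ^ 2 + I ^ 2 / 4 * (E - P * F) ^ 2) * hk +
    ((E - P * F) ^ 2 / 4) * hI + P * hexp
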